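/- Let ⟨A, Δ⟩ be a Jordan coalgebra over a field k of characteristic not 2 whose dual algebra A* is unital. Let B be a finite-dimensional subcoalgebra of ⟨A, Δ⟩ and set L = B ⊕ B' ⊕ [A*, B] ⊕ B̄ ⊆ L(A). Then there exists a linear map Δ_B : L → L(A) ⊗ L(A) such that for all f, g ∈ L(A*) and l ∈ L, ⟨[f,g], l⟩ = ⟨ρ(f ⊗ g), Δ_B(l)⟩, where ρ is the standard embedding of L(A*) ⊗ L(A*) into (L(A) ⊗ L(A))*. -/

import Mathlib

open TensorProduct

variable {k : Type*} [Field k] {A : Type*} [AddCommGroup A] [Module k A]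

/-- The multiplication on the dual space `A*` induced by a comultiplication `Δ`:
`⟨fg, a⟩ = Σ ⟨f, a₍₁₎⟩⟨g, a₍₂₎⟩`. -/
noncomputable def dmul (Δ : A →ₗ[k] A ⊗[k] A) (f g : (A →ₗ[k] k)) : (A →ₗ[k] k) :=
  (TensorProduct.lid k k).toLinearMap ∘ₗ TensorProduct.map f g ∘ₗ Δ

/-- The left action `f·a = Σ a₍₁₎ ⟨f, a₍₂₎⟩` of the dual algebra on `A`. -/
noncomputable def lact (Δ : A →ₗ[k] A ⊗[k] A) (f : (A →ₗ[k] k)) : A →ₗ[k] A :=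
  (TensorProduct.rid k A).toLinearMap ∘ₗ TensorProduct.map LinearMap.id f ∘ₗ Δ

/-- The right action `a·f = Σ ⟨f, a₍₁₎⟩ a₍₂₎` of the dual algebra on `A`. -/
noncomputable def ract (Δ : A →ₗ[k] A ⊗[k] A) (f : (A →ₗ[k] k)) : A →ₗ[k] A :=
  (TensorProduct.lid k A).toLinearMap ∘ₗ TensorProduct.map f LinearMap.id ∘ₗ Δ

/-- `⟨A, Δ⟩` is a Jordan coalgebra: its dual algebra is commutative and satisfies
the Jordan identity `((ff)g)f = (ff)(gf)`. -/
def IsJordanCoalgebra (Δ : A →ₗ[k] A ⊗[k] A) : Prop :=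
  (∀ f g : (A →ₗ[k] k), dmul Δ f g = dmul Δ g f) ∧
  (∀ f g : (A →ₗ[k] k),
    dmul Δ (dmul Δ (dmul Δ f f) g) f = dmul Δ (dmul Δ f f) (dmul Δ g f))

/-- `B` is a subcoalgebra: `Δ(B) ⊆ B ⊗ B`. -/
def IsSubcoalgebra (Δ : A →ₗ[k] A ⊗[k] A) (B : Submodule k A) : Prop :=
  ∀ b ∈ B, Δ b ∈ LinearMap.range (TensorProduct.map B.subtype B.subtype)

/-- `B` is a coideal: `Δ(B) ⊆ B ⊗ A + A ⊗ B`. -/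
def IsCoideal (Δ : A →ₗ[k] A ⊗[k] A) (B : Submodule k A) : Prop :=
  ∀ b ∈ B, Δ b ∈
    LinearMap.range (TensorProduct.map B.subtype (LinearMap.id (R := k) (M := A))) ⊔
    LinearMap.range (TensorProduct.map (LinearMap.id (R := k) (M := A)) B.subtype)

/-- A derivation of the dual algebra `A*`. -/
def IsDerivation (Δ : A →ₗ[k] A ⊗[k] A)
    (d : (A →ₗ[k] k) →ₗ[k] (A →ₗ[k] k)) : Prop :=
  ∀ f g : (A →ₗ[k] k), d (dmul Δ f g) = dmul Δ (d f) g + dmul Δ f (d g)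

theorem dmul_add_left (Δ : A →ₗ[k] A ⊗[k] A) (f₁ f₂ g : (A →ₗ[k] k)) :
    dmul Δ (f₁ + f₂) g = dmul Δ f₁ g + dmul Δ f₂ g := by
  unfold dmul; rw [TensorProduct.map_add_left]; ext a; simp

theorem dmul_add_right (Δ : A →ₗ[k] A ⊗[k] A) (f g₁ g₂ : (A →ₗ[k] k)) :
    dmul Δ f (g₁ + g₂) = dmul Δ f g₁ + dmul Δ f g₂ := by
  unfold dmul; rw [TensorProduct.map_add_right]; ext a; simp

theorem dmul_smul_left (Δ : A →ₗ[k] A ⊗[k] A) (c : k) (f g : (A →ₗ[k] k)) :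
    dmul Δ (c • f) g = c • dmul Δ f g := by
  unfold dmul; rw [TensorProduct.map_smul_left]; ext a; simp

theorem dmul_smul_right (Δ : A →ₗ[k] A ⊗[k] A) (c : k) (f g : (A →ₗ[k] k)) :
    dmul Δ f (c • g) = c • dmul Δ f g := by
  unfold dmul; rw [TensorProduct.map_smul_right]; ext a; simp

theorem dmul_zero_left (Δ : A →ₗ[k] A ⊗[k] A) (g : (A →ₗ[k] k)) :
    dmul Δ (0 : (A →ₗ[k] k)) g = 0 := by
  ext a; simp [dmul]

theorem dmul_zero_right (Δ : A →ₗ[k] A ⊗[k] A) (f : (A →ₗ[k] k)) :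
    dmul Δ f (0 : (A →ₗ[k] k)) = 0 := by
  ext a; simp [dmul]

/-- The operator of right multiplication `f' : g ↦ gf` on the dual algebra. -/
noncomputable def Rop (Δ : A →ₗ[k] A ⊗[k] A) (f : (A →ₗ[k] k)) :
    (A →ₗ[k] k) →ₗ[k] (A →ₗ[k] k) where
  toFun g := dmul Δ g f
  map_add' g₁ g₂ := dmul_add_left Δ g₁ g₂ f
  map_smul' c g := dmul_smul_left Δ c g f

/-- The inner derivation `[f,g] = f'g' - g'f'` (in right-operator convention,
`x[f,g] = (xf)g - (xg)f`). -/
noncomputable def commD (Δ : A →ₗ[k] A ⊗[k] A) (f g : (A →ₗ[k] k)) :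
    (A →ₗ[k] k) →ₗ[k] (A →ₗ[k] k) :=
  Rop Δ g ∘ₗ Rop Δ f - Rop Δ f ∘ₗ Rop Δ g

/-- The space of inner derivations of the dual algebra. -/
noncomputable def IntDer (Δ : A →ₗ[k] A ⊗[k] A) :
    Submodule k ((A →ₗ[k] k) →ₗ[k] (A →ₗ[k] k)) :=
  Submodule.span k {d | ∃ f g : (A →ₗ[k] k), d = commD Δ f g}

/-- A weakly inner derivation of the dual algebra: a derivation that agrees with some
inner derivation on every finite-dimensional subcoalgebra. -/
def IsWIntDer (Δ : A →ₗ[k] A ⊗[k] A)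
    (d : (A →ₗ[k] k) →ₗ[k] (A →ₗ[k] k)) : Prop :=
  IsDerivation Δ d ∧
  ∀ B : Submodule k A, IsSubcoalgebra Δ B → FiniteDimensional k B →
    ∃ i ∈ IntDer Δ, ∀ f : (A →ₗ[k] k), ∀ b ∈ B, d f b = i f b

/-- The space of weakly inner derivations, as a submodule of `End(A*)`. -/
noncomputable def WIntDer (Δ : A →ₗ[k] A ⊗[k] A) :
    Submodule k ((A →ₗ[k] k) →ₗ[k] (A →ₗ[k] k)) where
  carrier := {d | IsWIntDer Δ d}
  zero_mem' := by
    refine ⟨fun f g => by simp [dmul_zero_left, dmul_zero_right],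
      fun B hB hfin => ⟨0, Submodule.zero_mem _, fun f b hb => by simp⟩⟩
  add_mem' := by
    rintro d₁ d₂ ⟨hd₁, hw₁⟩ ⟨hd₂, hw₂⟩
    refine ⟨fun f g => ?_, fun B hB hfin => ?_⟩
    · simp only [LinearMap.add_apply, hd₁ f g, hd₂ f g, dmul_add_left, dmul_add_right]
      abel
    · obtain ⟨i₁, hi₁, he₁⟩ := hw₁ B hB hfin
      obtain ⟨i₂, hi₂, he₂⟩ := hw₂ B hB hfin
      exact ⟨i₁ + i₂, Submodule.add_mem _ hi₁ hi₂, fun f b hb => by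
        simp [LinearMap.add_apply, he₁ f b hb, he₂ f b hb]⟩
  smul_mem' := by
    rintro c d ⟨hd, hw⟩
    refine ⟨fun f g => ?_, fun B hB hfin => ?_⟩
    · simp only [LinearMap.smul_apply, hd f g, dmul_smul_left, dmul_smul_right, smul_add]
    · obtain ⟨i, hi, he⟩ := hw B hB hfin
      exact ⟨c • i, Submodule.smul_mem _ c hi, fun f b hb => by
        simp [LinearMap.smul_apply, he f b hb]⟩
/-- Multiplication in the null extension `C = A* ⊕ A`. -/
noncomputable def cmul (Δ : A →ₗ[k] A ⊗[k] A) (x y : (A →ₗ[k] k) × A) :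
    (A →ₗ[k] k) × A :=
  (dmul Δ x.1 y.1, lact Δ x.1 y.2 + lact Δ y.1 x.2)

theorem lact_add_left (Δ : A →ₗ[k] A ⊗[k] A) (f₁ f₂ : (A →ₗ[k] k)) (a : A) :
    lact Δ (f₁ + f₂) a = lact Δ f₁ a + lact Δ f₂ a := by
  simp [lact, TensorProduct.map_add_right]

theorem lact_smul_left (Δ : A →ₗ[k] A ⊗[k] A) (c : k) (f : (A →ₗ[k] k)) (a : A) :
    lact Δ (c • f) a = c • lact Δ f a := by
  simp [lact, TensorProduct.map_smul_right]

/-- Right multiplication by an element of the null extension `C = A* ⊕ A`,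
as a linear operator on `C`. -/
noncomputable def RopC (Δ : A →ₗ[k] A ⊗[k] A) (x : (A →ₗ[k] k) × A) :
    ((A →ₗ[k] k) × A) →ₗ[k] ((A →ₗ[k] k) × A) where
  toFun y := cmul Δ y x
  map_add' y z := by
    simp only [cmul, Prod.fst_add, Prod.snd_add, Prod.mk_add_mk, dmul_add_left,
      lact_add_left, map_add]
    rw [Prod.mk.injEq]
    constructor
    · rfl
    · abel
  map_smul' c y := by
    simp only [cmul, Prod.smul_fst, Prod.smul_snd, Prod.smul_mk, dmul_smul_left,
      lact_smul_left, map_smul, RingHom.id_apply, smul_add]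

/-- The operator `[x,y] = x'y' - y'x'` on the null extension `C`
(right-operator convention: `z[x,y] = (zx)y - (zy)x`). -/
noncomputable def commC (Δ : A →ₗ[k] A ⊗[k] A) (x y : (A →ₗ[k] k) × A) :
    ((A →ₗ[k] k) × A) →ₗ[k] ((A →ₗ[k] k) × A) :=
  RopC Δ y ∘ₗ RopC Δ x - RopC Δ x ∘ₗ RopC Δ y

/-- The mixed commutator operator `[f,a]` on `C`, for `f ∈ A*` and `a ∈ A`. -/
noncomputable def commMixed (Δ : A →ₗ[k] A ⊗[k] A) (f : (A →ₗ[k] k)) (a : A) :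
    ((A →ₗ[k] k) × A) →ₗ[k] ((A →ₗ[k] k) × A) :=
  commC Δ (f, 0) (0, a)

/-- The space `[A*, A]`, spanned by the mixed commutators, inside `End(C)`. -/
noncomputable def CommAA (Δ : A →ₗ[k] A ⊗[k] A) :
    Submodule k (((A →ₗ[k] k) × A) →ₗ[k] ((A →ₗ[k] k) × A)) :=
  Submodule.span k {u | ∃ (f : (A →ₗ[k] k)) (a : A), u = commMixed Δ f a}

/-- The `AddCommGroup` structure of the submodule `[A*, A]` (found automatically by the
older Lean; stated explicitly for the current one). -/
noncomputable instance CommAA.instAddCommGroup (Δ : A →ₗ[k] A ⊗[k] A) :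
    AddCommGroup ↥(CommAA Δ) :=
  @Submodule.addCommGroup k (((A →ₗ[k] k) × A) →ₗ[k] ((A →ₗ[k] k) × A)) _
    LinearMap.addCommGroup LinearMap.module (CommAA Δ)

/-- The Kantor–Koecher–Tits bracket on `L(A*) = A* ⊕ (A*)' ⊕ WIntDer(A*) ⊕ Ā*`
(the third component is taken in `End(A*)`; for elements of `L(A*)` it lies in
`WIntDer(A*)`).  An element `(a, g, d, b)` represents `a + g' + d + b̄`. -/
noncomputable def bracketStar (Δ : A →ₗ[k] A ⊗[k] A)
    (l₁ l₂ : (A →ₗ[k] k) × (A →ₗ[k] k) × ((A →ₗ[k] k) →ₗ[k] (A →ₗ[k] k)) × (A →ₗ[k] k)) :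
    (A →ₗ[k] k) × (A →ₗ[k] k) × ((A →ₗ[k] k) →ₗ[k] (A →ₗ[k] k)) × (A →ₗ[k] k) :=
  (dmul Δ l₁.1 l₂.2.1 + l₂.2.2.1 l₁.1 - dmul Δ l₂.1 l₁.2.1 - l₁.2.2.1 l₂.1,
   dmul Δ l₁.1 l₂.2.2.2 - dmul Δ l₂.1 l₁.2.2.2 + l₂.2.2.1 l₁.2.1 - l₁.2.2.1 l₂.2.1,
   - commD Δ l₁.1 l₂.2.2.2 + commD Δ l₂.1 l₁.2.2.2 + commD Δ l₁.2.1 l₂.2.1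
     + (l₂.2.2.1 ∘ₗ l₁.2.2.1 - l₁.2.2.1 ∘ₗ l₂.2.2.1),
   - dmul Δ l₁.2.2.2 l₂.2.1 + l₂.2.2.1 l₁.2.2.2 + dmul Δ l₂.2.2.2 l₁.2.1
     - l₁.2.2.1 l₂.2.2.2)

/-- The involution `ε(a + c' + d + b̄) = b - c' + d + ā` on `L(A*)`. -/
def epsStar
    (l : (A →ₗ[k] k) × (A →ₗ[k] k) × ((A →ₗ[k] k) →ₗ[k] (A →ₗ[k] k)) × (A →ₗ[k] k)) :
    (A →ₗ[k] k) × (A →ₗ[k] k) × ((A →ₗ[k] k) →ₗ[k] (A →ₗ[k] k)) × (A →ₗ[k] k) :=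
  (l.2.2.2, - l.2.1, l.2.2.1, l.1)

/-- The module action `[l, l*]` of `L(A*)` on `L(A) = A ⊕ A' ⊕ [A*,A] ⊕ Ā`.
`Dex d` is the canonical extension of a weakly inner derivation `d` to `A`
(Proposition 2), passed as a parameter.  An element `(a, b, v, c)` of `L(A)`
represents `a + b' + v + c̄`. -/
noncomputable def actLL (Δ : A →ₗ[k] A ⊗[k] A)
    (Dex : ((A →ₗ[k] k) →ₗ[k] (A →ₗ[k] k)) → (A →ₗ[k] A))
    (l : A × A × (((A →ₗ[k] k) × A) →ₗ[k] ((A →ₗ[k] k) × A)) × A)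
    (ls : (A →ₗ[k] k) × (A →ₗ[k] k) × ((A →ₗ[k] k) →ₗ[k] (A →ₗ[k] k)) × (A →ₗ[k] k)) :
    A × A × (((A →ₗ[k] k) × A) →ₗ[k] ((A →ₗ[k] k) × A)) × A :=
  (lact Δ ls.2.1 l.1 + Dex ls.2.2.1 l.1 - lact Δ ls.1 l.2.1 - (l.2.2.1 (ls.1, 0)).2,
   ract Δ ls.2.2.2 l.1 - lact Δ ls.1 l.2.2.2 + Dex ls.2.2.1 l.2.1,
   commMixed Δ ls.2.2.2 l.1 + commMixed Δ ls.1 l.2.2.2 - commMixed Δ ls.2.1 l.2.1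
     + (RopC Δ (ls.2.1, 0) ∘ₗ l.2.2.1 - l.2.2.1 ∘ₗ RopC Δ (ls.2.1, 0))
     + ((LinearMap.prodMap ls.2.2.1 (Dex ls.2.2.1)) ∘ₗ l.2.2.1
        - l.2.2.1 ∘ₗ (LinearMap.prodMap ls.2.2.1 (Dex ls.2.2.1))),
   - lact Δ ls.2.1 l.2.2.2 + Dex ls.2.2.1 l.2.2.2 + lact Δ ls.2.2.2 l.2.1
     - (l.2.2.1 (ls.2.2.2, 0)).2)

/-- The natural pairing between `L(A*)` and `L(A)`, via the identification
`WIntDer(A*) ≅ ([A*,A])*` given by `φ` (Lemma 2). -/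
noncomputable def pairSF (Δ : A →ₗ[k] A ⊗[k] A)
    (φ : ↥(WIntDer Δ) →ₗ[k] (↥(CommAA Δ) →ₗ[k] k))
    (ls : (A →ₗ[k] k) × (A →ₗ[k] k) × ((A →ₗ[k] k) →ₗ[k] (A →ₗ[k] k)) × (A →ₗ[k] k))
    (l : A × A × (((A →ₗ[k] k) × A) →ₗ[k] ((A →ₗ[k] k) × A)) × A)
    (hd : ls.2.2.1 ∈ WIntDer Δ) (hv : l.2.2.1 ∈ CommAA Δ) : k :=
  ls.1 l.1 + ls.2.1 l.2.1 + φ ⟨ls.2.2.1, hd⟩ ⟨l.2.2.1, hv⟩ + ls.2.2.2 l.2.2.2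

/-- The space `L(A) = A ⊕ A' ⊕ [A*,A] ⊕ Ā` underlying the Lie coalgebra of Theorem 1.
An element `(a, b, v, c)` represents `a + b' + v + c̄`. -/
@[reducible] def LKKT (Δ : A →ₗ[k] A ⊗[k] A) : Type _ :=
  A × A × ↥(CommAA Δ) × A

/-- An element of `L(A*) = A* ⊕ (A*)' ⊕ WIntDer(A*) ⊕ Ā*` as a linear functional on
`L(A)`, via the identification `WIntDer(A*) ≅ ([A*,A])*` given by `φ` (Lemma 2). -/
noncomputable def toFunc (Δ : A →ₗ[k] A ⊗[k] A)
    (φ : ↥(WIntDer Δ) →ₗ[k] (↥(CommAA Δ) →ₗ[k] k))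
    (f : (A →ₗ[k] k) × (A →ₗ[k] k) × ((A →ₗ[k] k) →ₗ[k] (A →ₗ[k] k)) × (A →ₗ[k] k))
    (hf : f.2.2.1 ∈ WIntDer Δ) : LKKT Δ →ₗ[k] k :=
  f.1 ∘ₗ LinearMap.fst k A (A × (↥(CommAA Δ) × A)) +
  f.2.1 ∘ₗ (LinearMap.fst k A (↥(CommAA Δ) × A)
      ∘ₗ LinearMap.snd k A (A × (↥(CommAA Δ) × A))) +
  (φ ⟨f.2.2.1, hf⟩) ∘ₗ (LinearMap.fst k ↥(CommAA Δ) A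
      ∘ₗ LinearMap.snd k A (↥(CommAA Δ) × A)
      ∘ₗ LinearMap.snd k A (A × (↥(CommAA Δ) × A))) +
  f.2.2.2 ∘ₗ (LinearMap.snd k ↥(CommAA Δ) A
      ∘ₗ LinearMap.snd k A (↥(CommAA Δ) × A)
      ∘ₗ LinearMap.snd k A (A × (↥(CommAA Δ) × A)))

/-- The standard embedding `ρ` on a pair of functionals: `ρ(F ⊗ G)` as a functional
on `M ⊗ M`. -/
noncomputable def pairT {M : Type*} [AddCommGroup M] [Module k M]
    (F G : M →ₗ[k] k) : (M ⊗[k] M) →ₗ[k] k :=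
  (TensorProduct.lid k k).toLinearMap ∘ₗ TensorProduct.map F G

/-- The map `π(a + b' + v + c̄) = c - b' + v + ā` on `L(A)`. -/
def piL (Δ : A →ₗ[k] A ⊗[k] A) (l : LKKT Δ) : LKKT Δ :=
  (l.2.2.2, - l.2.1, l.2.2.1, l.1)

/-- The natural inclusion `A → L(A)`. -/
noncomputable def inclA (Δ : A →ₗ[k] A ⊗[k] A) : A →ₗ[k] LKKT Δ :=
  LinearMap.prod LinearMap.id (LinearMap.prod 0 (LinearMap.prod 0 0))


section Lemma5Aux

variable (Δ : A →ₗ[k] A ⊗[k] A)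

theorem dmul_apply_lact (f u : A →ₗ[k] k) (a : A) :
    dmul Δ f u a = f (lact Δ u a) := by
  simp only [dmul, lact, LinearMap.comp_apply, LinearEquiv.coe_coe]
  generalize Δ a = t
  induction t using TensorProduct.induction_on with
  | zero => simp
  | tmul x y => simp [mul_comm]
  | add x y hx hy => simp only [map_add, hx, hy]

theorem dmul_apply_ract (h u : A →ₗ[k] k) (a : A) :
    dmul Δ h u a = u (ract Δ h a) := by
  simp only [dmul, ract, LinearMap.comp_apply, LinearEquiv.coe_coe]
  generalize Δ a = t
  induction t using TensorProduct.induction_on with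
  | zero => simp
  | tmul x y => simp
  | add x y hx hy => simp only [map_add, hx, hy]

theorem lact_mem {B : Submodule k A} (hB : IsSubcoalgebra Δ B) (u : A →ₗ[k] k)
    {a : A} (ha : a ∈ B) : lact Δ u a ∈ B := by
  obtain ⟨t, ht⟩ := hB a ha
  simp only [lact, LinearMap.comp_apply, LinearEquiv.coe_coe, ← ht]
  clear ht
  induction t using TensorProduct.induction_on with
  | zero => simp
  | tmul x y => simpa using B.smul_mem _ x.2
  | add x y hx hy => simp only [map_add]; exact B.add_mem hx hy

theorem commD_apply (u w f : A →ₗ[k] k) :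
    commD Δ u w f = dmul Δ (dmul Δ f u) w - dmul Δ (dmul Δ f w) u := rfl

theorem commD_apply_lact (u w f : A →ₗ[k] k) (a : A) :
    commD Δ u w f a = f (lact Δ u (lact Δ w a) - lact Δ w (lact Δ u a)) := by
  rw [commD_apply, LinearMap.sub_apply, map_sub,
    dmul_apply_lact, dmul_apply_lact, dmul_apply_lact, dmul_apply_lact]

theorem existsZ_intDer {B : Submodule k A} (hB : IsSubcoalgebra Δ B)
    {i : (A →ₗ[k] k) →ₗ[k] (A →ₗ[k] k)} (hi : i ∈ IntDer Δ) {a : A} (ha : a ∈ B) :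
    ∃ z ∈ B, ∀ f : A →ₗ[k] k, i f a = f z := by
  refine Submodule.span_induction ?_ ?_ ?_ ?_ hi
  · rintro x ⟨u, w, rfl⟩
    exact ⟨lact Δ u (lact Δ w a) - lact Δ w (lact Δ u a),
      B.sub_mem (lact_mem Δ hB u (lact_mem Δ hB w ha)) (lact_mem Δ hB w (lact_mem Δ hB u ha)),
      fun f => commD_apply_lact Δ u w f a⟩
  · exact ⟨0, B.zero_mem, fun f => by simp⟩
  · rintro x y _ _ ⟨z1, hz1, h1⟩ ⟨z2, hz2, h2⟩
    exact ⟨z1 + z2, B.add_mem hz1 hz2, fun f => by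
      simp [LinearMap.add_apply, h1 f, h2 f]⟩
  · rintro c x _ ⟨z, hz, h⟩
    exact ⟨c • z, B.smul_mem c hz, fun f => by
      simp [LinearMap.smul_apply, h f]⟩

theorem existsZ {B : Submodule k A} (hB : IsSubcoalgebra Δ B) (hBfin : FiniteDimensional k ↥B)
    {e : (A →ₗ[k] k) →ₗ[k] (A →ₗ[k] k)} (he : e ∈ WIntDer Δ) {a : A} (ha : a ∈ B) :
    ∃ z ∈ B, ∀ f : A →ₗ[k] k, e f a = f z := by
  obtain ⟨i, hi, hagree⟩ := he.2 B hB hBfin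
  obtain ⟨z, hz, h⟩ := existsZ_intDer Δ hB hi ha
  exact ⟨z, hz, fun f => (hagree f a ha).trans (h f)⟩

theorem keyK {B : Submodule k A} (hB : IsSubcoalgebra Δ B) (hBfin : FiniteDimensional k ↥B)
    {n : ℕ} (bs : Module.Basis (Fin n) k ↥B) (π : A →ₗ[k] ↥B) (hπ : ∀ z : ↥B, π ↑z = z)
    {e : (A →ₗ[k] k) →ₗ[k] (A →ₗ[k] k)} (he : e ∈ WIntDer Δ) {a : A} (ha : a ∈ B)
    (f : A →ₗ[k] k) :
    e f a = ∑ i, e (bs.coord i ∘ₗ π) a * f ↑(bs i) := by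
  obtain ⟨z, hz, h⟩ := existsZ Δ hB hBfin he ha
  have hcoord : ∀ i, e (bs.coord i ∘ₗ π) a = bs.repr ⟨z, hz⟩ i := by
    intro i
    rw [h (bs.coord i ∘ₗ π)]
    have : π z = ⟨z, hz⟩ := hπ ⟨z, hz⟩
    simp [LinearMap.comp_apply, this]
  have hzsum : z = ∑ i, bs.repr ⟨z, hz⟩ i • (↑(bs i) : A) := by
    have := bs.sum_repr ⟨z, hz⟩
    have h2 := congrArg (Submodule.subtype B) this
    simp only [map_sum, map_smul, Submodule.subtype_apply] at h2
    exact h2.symm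
  rw [h f, hzsum, map_sum]
  refine Finset.sum_congr rfl fun i _ => ?_
  rw [map_smul, hcoord i, smul_eq_mul]

theorem pairT_tmul {M : Type*} [AddCommGroup M] [Module k M] (F G : M →ₗ[k] k) (x y : M) :
    pairT F G (x ⊗ₜ[k] y) = F x * G y := by
  simp [pairT]

theorem pairT_map {M N : Type*} [AddCommGroup M] [Module k M] [AddCommGroup N] [Module k N]
    (F G : M →ₗ[k] k) (p q : N →ₗ[k] M) (t : N ⊗[k] N) :
    pairT F G (TensorProduct.map p q t) = pairT (F ∘ₗ p) (G ∘ₗ q) t := by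
  induction t using TensorProduct.induction_on with
  | zero => simp
  | tmul x y => simp [pairT]
  | add x y hx hy => simp only [map_add, hx, hy]

theorem pairT_comm {M : Type*} [AddCommGroup M] [Module k M] (F G : M →ₗ[k] k) (t : M ⊗[k] M) :
    pairT F G (TensorProduct.comm k M M t) = pairT G F t := by
  induction t using TensorProduct.induction_on with
  | zero => simp
  | tmul x y => simp [pairT, mul_comm]
  | add x y hx hy => simp only [map_add, hx, hy]

theorem dmul_eq_pairT {B : Submodule k A} (f g : A →ₗ[k] k) {a : A} {t : ↥B ⊗[k] ↥B}
    (ht : TensorProduct.map B.subtype B.subtype t = Δ a) :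
    dmul Δ f g a = pairT (f ∘ₗ B.subtype) (g ∘ₗ B.subtype) t := by
  simp only [dmul, LinearMap.comp_apply, LinearEquiv.coe_coe, ← ht]
  clear ht
  induction t using TensorProduct.induction_on with
  | zero => simp [pairT]
  | tmul x y => simp [pairT]
  | add x y hx hy => simp only [map_add, hx, hy]

end Lemma5Aux


section Lemma5Pieces

set_option maxHeartbeats 2000000
set_option synthInstance.maxHeartbeats 2000000

variable (Δ : A →ₗ[k] A ⊗[k] A)

/-- Inclusion of `A` into the first component of `L(A)`. -/
noncomputable def jA1 : A →ₗ[k] LKKT Δ :=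
  LinearMap.prod LinearMap.id (LinearMap.prod 0 (LinearMap.prod 0 0))

/-- Inclusion of `A` into the second component of `L(A)`. -/
noncomputable def jA2 : A →ₗ[k] LKKT Δ :=
  LinearMap.prod 0 (LinearMap.prod LinearMap.id (LinearMap.prod 0 0))

/-- Inclusion of `[A*,A]` into the third component of `L(A)`. -/
noncomputable def jA3 : ↥(CommAA Δ) →ₗ[k] LKKT Δ :=
  LinearMap.prod 0 (LinearMap.prod 0 (LinearMap.prod LinearMap.id 0))

/-- Inclusion of `A` into the fourth component of `L(A)`. -/
noncomputable def jA4 : A →ₗ[k] LKKT Δ :=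
  LinearMap.prod 0 (LinearMap.prod 0 (LinearMap.prod 0 LinearMap.id))

theorem jA1_apply (a : A) : jA1 Δ a = (a, 0, 0, 0) := rfl
theorem jA2_apply (a : A) : jA2 Δ a = (0, a, 0, 0) := rfl
theorem jA3_apply (w : ↥(CommAA Δ)) : jA3 Δ w = (0, 0, w, 0) := rfl
theorem jA4_apply (a : A) : jA4 Δ a = (0, 0, 0, a) := rfl

variable (φ : ↥(WIntDer Δ) →ₗ[k] (↥(CommAA Δ) →ₗ[k] k))

theorem toFunc_jA1
    (f : (A →ₗ[k] k) × (A →ₗ[k] k) × ((A →ₗ[k] k) →ₗ[k] (A →ₗ[k] k)) × (A →ₗ[k] k))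
    (hf : f.2.2.1 ∈ WIntDer Δ) (a : A) :
    toFunc Δ φ f hf (jA1 Δ a) = f.1 a := by
  simp [toFunc, jA1]

theorem toFunc_jA2
    (f : (A →ₗ[k] k) × (A →ₗ[k] k) × ((A →ₗ[k] k) →ₗ[k] (A →ₗ[k] k)) × (A →ₗ[k] k))
    (hf : f.2.2.1 ∈ WIntDer Δ) (a : A) :
    toFunc Δ φ f hf (jA2 Δ a) = f.2.1 a := by
  simp [toFunc, jA2]

theorem toFunc_jA3
    (f : (A →ₗ[k] k) × (A →ₗ[k] k) × ((A →ₗ[k] k) →ₗ[k] (A →ₗ[k] k)) × (A →ₗ[k] k))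
    (hf : f.2.2.1 ∈ WIntDer Δ) (w : ↥(CommAA Δ)) :
    toFunc Δ φ f hf (jA3 Δ w) = φ ⟨f.2.2.1, hf⟩ w := by
  simp [toFunc, jA3]

theorem toFunc_jA4
    (f : (A →ₗ[k] k) × (A →ₗ[k] k) × ((A →ₗ[k] k) →ₗ[k] (A →ₗ[k] k)) × (A →ₗ[k] k))
    (hf : f.2.2.1 ∈ WIntDer Δ) (a : A) :
    toFunc Δ φ f hf (jA4 Δ a) = f.2.2.2 a := by
  simp [toFunc, jA4]

theorem toFunc_comp_jA1
    (f : (A →ₗ[k] k) × (A →ₗ[k] k) × ((A →ₗ[k] k) →ₗ[k] (A →ₗ[k] k)) × (A →ₗ[k] k))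
    (hf : f.2.2.1 ∈ WIntDer Δ) :
    toFunc Δ φ f hf ∘ₗ jA1 Δ = f.1 :=
  LinearMap.ext fun a => toFunc_jA1 Δ φ f hf a

theorem toFunc_comp_jA2
    (f : (A →ₗ[k] k) × (A →ₗ[k] k) × ((A →ₗ[k] k) →ₗ[k] (A →ₗ[k] k)) × (A →ₗ[k] k))
    (hf : f.2.2.1 ∈ WIntDer Δ) :
    toFunc Δ φ f hf ∘ₗ jA2 Δ = f.2.1 :=
  LinearMap.ext fun a => toFunc_jA2 Δ φ f hf a

theorem toFunc_comp_jA4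
    (f : (A →ₗ[k] k) × (A →ₗ[k] k) × ((A →ₗ[k] k) →ₗ[k] (A →ₗ[k] k)) × (A →ₗ[k] k))
    (hf : f.2.2.1 ∈ WIntDer Δ) :
    toFunc Δ φ f hf ∘ₗ jA4 Δ = f.2.2.2 :=
  LinearMap.ext fun a => toFunc_jA4 Δ φ f hf a

theorem toFunc_comp_jA1' {N : Type*} [AddCommGroup N] [Module k N]
    (f : (A →ₗ[k] k) × (A →ₗ[k] k) × ((A →ₗ[k] k) →ₗ[k] (A →ₗ[k] k)) × (A →ₗ[k] k))
    (hf : f.2.2.1 ∈ WIntDer Δ) (p : N →ₗ[k] A) :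
    toFunc Δ φ f hf ∘ₗ (jA1 Δ ∘ₗ p) = f.1 ∘ₗ p := by
  rw [← LinearMap.comp_assoc, toFunc_comp_jA1]

theorem toFunc_comp_jA2' {N : Type*} [AddCommGroup N] [Module k N]
    (f : (A →ₗ[k] k) × (A →ₗ[k] k) × ((A →ₗ[k] k) →ₗ[k] (A →ₗ[k] k)) × (A →ₗ[k] k))
    (hf : f.2.2.1 ∈ WIntDer Δ) (p : N →ₗ[k] A) :
    toFunc Δ φ f hf ∘ₗ (jA2 Δ ∘ₗ p) = f.2.1 ∘ₗ p := by
  rw [← LinearMap.comp_assoc, toFunc_comp_jA2]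

theorem toFunc_comp_jA4' {N : Type*} [AddCommGroup N] [Module k N]
    (f : (A →ₗ[k] k) × (A →ₗ[k] k) × ((A →ₗ[k] k) →ₗ[k] (A →ₗ[k] k)) × (A →ₗ[k] k))
    (hf : f.2.2.1 ∈ WIntDer Δ) (p : N →ₗ[k] A) :
    toFunc Δ φ f hf ∘ₗ (jA4 Δ ∘ₗ p) = f.2.2.2 ∘ₗ p := by
  rw [← LinearMap.comp_assoc, toFunc_comp_jA4]

/-- The property that `t` is a valid value of `Δ_B` at `x`. -/
def Good (x : LKKT Δ) (t : LKKT Δ ⊗[k] LKKT Δ) : Prop :=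
  ∀ (f g : (A →ₗ[k] k) × (A →ₗ[k] k) × ((A →ₗ[k] k) →ₗ[k] (A →ₗ[k] k)) × (A →ₗ[k] k))
    (hf : f.2.2.1 ∈ WIntDer Δ) (hg : g.2.2.1 ∈ WIntDer Δ)
    (hbr : (bracketStar Δ f g).2.2.1 ∈ WIntDer Δ),
    toFunc Δ φ (bracketStar Δ f g) hbr x
      = pairT (M := LKKT Δ) (toFunc Δ φ f hf) (toFunc Δ φ g hg) t

theorem Good.add {x y : LKKT Δ} {t s : LKKT Δ ⊗[k] LKKT Δ}
    (hx : Good Δ φ x t) (hy : Good Δ φ y s) : Good Δ φ (x + y) (t + s) :=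
  fun f g hf hg hbr => by
    rw [map_add, map_add, hx f g hf hg hbr, hy f g hf hg hbr]

theorem Good.smul (c : k) {x : LKKT Δ} {t : LKKT Δ ⊗[k] LKKT Δ}
    (hx : Good Δ φ x t) : Good Δ φ (c • x) (c • t) :=
  fun f g hf hg hbr => by
    rw [map_smul, map_smul, hx f g hf hg hbr]

theorem Good.zero : Good Δ φ 0 0 :=
  fun f g hf hg hbr => by simp


theorem piece1 {B : Submodule k A} (hB : IsSubcoalgebra Δ B) (hBfin : FiniteDimensional k ↥B)
    {n : ℕ} (bs : Module.Basis (Fin n) k ↥B) (π : A →ₗ[k] ↥B) (hπ : ∀ z : ↥B, π ↑z = z)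
    (hφ : ∀ (e : ↥(WIntDer Δ)) (f : A →ₗ[k] k) (a : A) (h : commMixed Δ f a ∈ CommAA Δ),
      φ e ⟨commMixed Δ f a, h⟩ = (e : ((A →ₗ[k] k) →ₗ[k] (A →ₗ[k] k))) f a)
    {a : A} (ha : a ∈ B) :
    ∃ t : LKKT Δ ⊗[k] LKKT Δ, Good Δ φ (jA1 Δ a) t := by
  obtain ⟨tB, htB⟩ := hB a ha
  have memC : ∀ (h : A →ₗ[k] k) (x : A), commMixed Δ h x ∈ CommAA Δ :=
    fun h x => Submodule.subset_span ⟨h, x, rfl⟩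
  refine ⟨((TensorProduct.map (jA1 Δ ∘ₗ B.subtype) (jA2 Δ ∘ₗ B.subtype) tB)
      + (∑ i, jA1 Δ ↑(bs i) ⊗ₜ[k] jA3 Δ ⟨commMixed Δ (bs.coord i ∘ₗ π) a, memC _ _⟩)
      + (-1 : k) • (TensorProduct.map (jA2 Δ ∘ₗ B.subtype) (jA1 Δ ∘ₗ B.subtype)
          (TensorProduct.comm k _ _ tB))
      + (-1 : k) • ∑ i, jA3 Δ ⟨commMixed Δ (bs.coord i ∘ₗ π) a, memC _ _⟩ ⊗ₜ[k] jA1 Δ ↑(bs i)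
      : LKKT Δ ⊗[k] LKKT Δ), ?_⟩
  intro f g hf hg hbr
  have e0 : toFunc Δ φ (bracketStar Δ f g) hbr (jA1 Δ a) = (bracketStar Δ f g).1 a :=
    toFunc_jA1 Δ φ _ hbr a
  have e1 : (bracketStar Δ f g).1 a
      = dmul Δ f.1 g.2.1 a + g.2.2.1 f.1 a - dmul Δ g.1 f.2.1 a - f.2.2.1 g.1 a := by
    simp [bracketStar]
  have r1 : pairT (M := LKKT Δ) (toFunc Δ φ f hf) (toFunc Δ φ g hg)
      (TensorProduct.map (jA1 Δ ∘ₗ B.subtype) (jA2 Δ ∘ₗ B.subtype) tB)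
      = dmul Δ f.1 g.2.1 a := by
    rw [pairT_map, ← LinearMap.comp_assoc, ← LinearMap.comp_assoc,
      toFunc_comp_jA1, toFunc_comp_jA2, ← dmul_eq_pairT Δ _ _ htB]
  have r3 : pairT (M := LKKT Δ) (toFunc Δ φ f hf) (toFunc Δ φ g hg)
      (TensorProduct.map (jA2 Δ ∘ₗ B.subtype) (jA1 Δ ∘ₗ B.subtype)
        (TensorProduct.comm k _ _ tB)) = dmul Δ g.1 f.2.1 a := by
    rw [pairT_map, ← LinearMap.comp_assoc, ← LinearMap.comp_assoc,
      toFunc_comp_jA2, toFunc_comp_jA1, pairT_comm, ← dmul_eq_pairT Δ _ _ htB]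
  have r2 : pairT (M := LKKT Δ) (toFunc Δ φ f hf) (toFunc Δ φ g hg)
      (∑ i, jA1 Δ ↑(bs i) ⊗ₜ[k] jA3 Δ ⟨commMixed Δ (bs.coord i ∘ₗ π) a, memC _ _⟩)
      = g.2.2.1 f.1 a := by
    rw [map_sum, keyK Δ hB hBfin bs π hπ hg ha f.1]
    refine Finset.sum_congr rfl fun i _ => ?_
    rw [pairT_tmul, toFunc_jA1, toFunc_jA3, hφ ⟨g.2.2.1, hg⟩ _ _ (memC _ _)]
    all_goals ring
  have r4 : pairT (M := LKKT Δ) (toFunc Δ φ f hf) (toFunc Δ φ g hg)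
      (∑ i, jA3 Δ ⟨commMixed Δ (bs.coord i ∘ₗ π) a, memC _ _⟩ ⊗ₜ[k] jA1 Δ ↑(bs i))
      = f.2.2.1 g.1 a := by
    rw [map_sum, keyK Δ hB hBfin bs π hπ hf ha g.1]
    refine Finset.sum_congr rfl fun i _ => ?_
    rw [pairT_tmul, toFunc_jA3, toFunc_jA1, hφ ⟨f.2.2.1, hf⟩ _ _ (memC _ _)]
    all_goals ring
  rw [e0, e1]
  simp only [map_add, map_smul, smul_eq_mul]
  rw [r1, r2, r3, r4]
  ring


theorem piece2 {B : Submodule k A} (hB : IsSubcoalgebra Δ B) (hBfin : FiniteDimensional k ↥B)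
    {n : ℕ} (bs : Module.Basis (Fin n) k ↥B) (π : A →ₗ[k] ↥B) (hπ : ∀ z : ↥B, π ↑z = z)
    (hφ : ∀ (e : ↥(WIntDer Δ)) (f : A →ₗ[k] k) (a : A) (h : commMixed Δ f a ∈ CommAA Δ),
      φ e ⟨commMixed Δ f a, h⟩ = (e : ((A →ₗ[k] k) →ₗ[k] (A →ₗ[k] k))) f a)
    {b : A} (hb : b ∈ B) :
    ∃ t : LKKT Δ ⊗[k] LKKT Δ, Good Δ φ (jA2 Δ b) t := by
  obtain ⟨tB, htB⟩ := hB b hb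
  have memC : ∀ (h : A →ₗ[k] k) (x : A), commMixed Δ h x ∈ CommAA Δ :=
    fun h x => Submodule.subset_span ⟨h, x, rfl⟩
  refine ⟨((TensorProduct.map (jA1 Δ ∘ₗ B.subtype) (jA4 Δ ∘ₗ B.subtype) tB)
      + (-1 : k) • (TensorProduct.map (jA4 Δ ∘ₗ B.subtype) (jA1 Δ ∘ₗ B.subtype)
          (TensorProduct.comm k _ _ tB))
      + (∑ i, jA2 Δ ↑(bs i) ⊗ₜ[k] jA3 Δ ⟨commMixed Δ (bs.coord i ∘ₗ π) b, memC _ _⟩)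
      + (-1 : k) • ∑ i, jA3 Δ ⟨commMixed Δ (bs.coord i ∘ₗ π) b, memC _ _⟩ ⊗ₜ[k] jA2 Δ ↑(bs i)
      : LKKT Δ ⊗[k] LKKT Δ), ?_⟩
  intro f g hf hg hbr
  have e0 : toFunc Δ φ (bracketStar Δ f g) hbr (jA2 Δ b) = (bracketStar Δ f g).2.1 b :=
    toFunc_jA2 Δ φ _ hbr b
  have e1 : (bracketStar Δ f g).2.1 b
      = dmul Δ f.1 g.2.2.2 b - dmul Δ g.1 f.2.2.2 b + g.2.2.1 f.2.1 b - f.2.2.1 g.2.1 b := by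
    simp [bracketStar]
  have r1 : pairT (M := LKKT Δ) (toFunc Δ φ f hf) (toFunc Δ φ g hg)
      (TensorProduct.map (jA1 Δ ∘ₗ B.subtype) (jA4 Δ ∘ₗ B.subtype) tB)
      = dmul Δ f.1 g.2.2.2 b := by
    rw [pairT_map, ← LinearMap.comp_assoc, ← LinearMap.comp_assoc,
      toFunc_comp_jA1, toFunc_comp_jA4, ← dmul_eq_pairT Δ _ _ htB]
  have r2 : pairT (M := LKKT Δ) (toFunc Δ φ f hf) (toFunc Δ φ g hg)
      (TensorProduct.map (jA4 Δ ∘ₗ B.subtype) (jA1 Δ ∘ₗ B.subtype)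
        (TensorProduct.comm k _ _ tB)) = dmul Δ g.1 f.2.2.2 b := by
    rw [pairT_map, ← LinearMap.comp_assoc, ← LinearMap.comp_assoc,
      toFunc_comp_jA4, toFunc_comp_jA1, pairT_comm, ← dmul_eq_pairT Δ _ _ htB]
  have r3 : pairT (M := LKKT Δ) (toFunc Δ φ f hf) (toFunc Δ φ g hg)
      (∑ i, jA2 Δ ↑(bs i) ⊗ₜ[k] jA3 Δ ⟨commMixed Δ (bs.coord i ∘ₗ π) b, memC _ _⟩)
      = g.2.2.1 f.2.1 b := by
    rw [map_sum, keyK Δ hB hBfin bs π hπ hg hb f.2.1]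
    refine Finset.sum_congr rfl fun i _ => ?_
    rw [pairT_tmul, toFunc_jA2, toFunc_jA3, hφ ⟨g.2.2.1, hg⟩ _ _ (memC _ _)]
    all_goals ring
  have r4 : pairT (M := LKKT Δ) (toFunc Δ φ f hf) (toFunc Δ φ g hg)
      (∑ i, jA3 Δ ⟨commMixed Δ (bs.coord i ∘ₗ π) b, memC _ _⟩ ⊗ₜ[k] jA2 Δ ↑(bs i))
      = f.2.2.1 g.2.1 b := by
    rw [map_sum, keyK Δ hB hBfin bs π hπ hf hb g.2.1]
    refine Finset.sum_congr rfl fun i _ => ?_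
    rw [pairT_tmul, toFunc_jA3, toFunc_jA2, hφ ⟨f.2.2.1, hf⟩ _ _ (memC _ _)]
    all_goals ring
  rw [e0, e1]
  simp only [map_add, map_smul, smul_eq_mul]
  rw [r1, r2, r3, r4]
  ring

theorem piece4 {B : Submodule k A} (hB : IsSubcoalgebra Δ B) (hBfin : FiniteDimensional k ↥B)
    {n : ℕ} (bs : Module.Basis (Fin n) k ↥B) (π : A →ₗ[k] ↥B) (hπ : ∀ z : ↥B, π ↑z = z)
    (hφ : ∀ (e : ↥(WIntDer Δ)) (f : A →ₗ[k] k) (a : A) (h : commMixed Δ f a ∈ CommAA Δ),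
      φ e ⟨commMixed Δ f a, h⟩ = (e : ((A →ₗ[k] k) →ₗ[k] (A →ₗ[k] k))) f a)
    {c : A} (hc : c ∈ B) :
    ∃ t : LKKT Δ ⊗[k] LKKT Δ, Good Δ φ (jA4 Δ c) t := by
  obtain ⟨tB, htB⟩ := hB c hc
  have memC : ∀ (h : A →ₗ[k] k) (x : A), commMixed Δ h x ∈ CommAA Δ :=
    fun h x => Submodule.subset_span ⟨h, x, rfl⟩
  refine ⟨((-1 : k) • (TensorProduct.map (jA4 Δ ∘ₗ B.subtype) (jA2 Δ ∘ₗ B.subtype) tB)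
      + (∑ i, jA4 Δ ↑(bs i) ⊗ₜ[k] jA3 Δ ⟨commMixed Δ (bs.coord i ∘ₗ π) c, memC _ _⟩)
      + (TensorProduct.map (jA2 Δ ∘ₗ B.subtype) (jA4 Δ ∘ₗ B.subtype)
          (TensorProduct.comm k _ _ tB))
      + (-1 : k) • ∑ i, jA3 Δ ⟨commMixed Δ (bs.coord i ∘ₗ π) c, memC _ _⟩ ⊗ₜ[k] jA4 Δ ↑(bs i)
      : LKKT Δ ⊗[k] LKKT Δ), ?_⟩
  intro f g hf hg hbr
  have e0 : toFunc Δ φ (bracketStar Δ f g) hbr (jA4 Δ c) = (bracketStar Δ f g).2.2.2 c :=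
    toFunc_jA4 Δ φ _ hbr c
  have e1 : (bracketStar Δ f g).2.2.2 c
      = - dmul Δ f.2.2.2 g.2.1 c + g.2.2.1 f.2.2.2 c + dmul Δ g.2.2.2 f.2.1 c
        - f.2.2.1 g.2.2.2 c := by
    simp [bracketStar]
  have r1 : pairT (M := LKKT Δ) (toFunc Δ φ f hf) (toFunc Δ φ g hg)
      (TensorProduct.map (jA4 Δ ∘ₗ B.subtype) (jA2 Δ ∘ₗ B.subtype) tB)
      = dmul Δ f.2.2.2 g.2.1 c := by
    rw [pairT_map, ← LinearMap.comp_assoc, ← LinearMap.comp_assoc,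
      toFunc_comp_jA4, toFunc_comp_jA2, ← dmul_eq_pairT Δ _ _ htB]
  have r3 : pairT (M := LKKT Δ) (toFunc Δ φ f hf) (toFunc Δ φ g hg)
      (TensorProduct.map (jA2 Δ ∘ₗ B.subtype) (jA4 Δ ∘ₗ B.subtype)
        (TensorProduct.comm k _ _ tB)) = dmul Δ g.2.2.2 f.2.1 c := by
    rw [pairT_map, ← LinearMap.comp_assoc, ← LinearMap.comp_assoc,
      toFunc_comp_jA2, toFunc_comp_jA4, pairT_comm, ← dmul_eq_pairT Δ _ _ htB]
  have r2 : pairT (M := LKKT Δ) (toFunc Δ φ f hf) (toFunc Δ φ g hg)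
      (∑ i, jA4 Δ ↑(bs i) ⊗ₜ[k] jA3 Δ ⟨commMixed Δ (bs.coord i ∘ₗ π) c, memC _ _⟩)
      = g.2.2.1 f.2.2.2 c := by
    rw [map_sum, keyK Δ hB hBfin bs π hπ hg hc f.2.2.2]
    refine Finset.sum_congr rfl fun i _ => ?_
    rw [pairT_tmul, toFunc_jA4, toFunc_jA3, hφ ⟨g.2.2.1, hg⟩ _ _ (memC _ _)]
    all_goals ring
  have r4 : pairT (M := LKKT Δ) (toFunc Δ φ f hf) (toFunc Δ φ g hg)
      (∑ i, jA3 Δ ⟨commMixed Δ (bs.coord i ∘ₗ π) c, memC _ _⟩ ⊗ₜ[k] jA4 Δ ↑(bs i))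
      = f.2.2.1 g.2.2.2 c := by
    rw [map_sum, keyK Δ hB hBfin bs π hπ hf hc g.2.2.2]
    refine Finset.sum_congr rfl fun i _ => ?_
    rw [pairT_tmul, toFunc_jA3, toFunc_jA4, hφ ⟨f.2.2.1, hf⟩ _ _ (memC _ _)]
    all_goals ring
  rw [e0, e1]
  simp only [map_add, map_smul, smul_eq_mul]
  rw [r1, r2, r3, r4]
  ring


theorem piece3 {B : Submodule k A} (hB : IsSubcoalgebra Δ B) (hBfin : FiniteDimensional k ↥B)
    {n : ℕ} (bs : Module.Basis (Fin n) k ↥B) (π : A →ₗ[k] ↥B) (hπ : ∀ z : ↥B, π ↑z = z)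
    (hφ : ∀ (e : ↥(WIntDer Δ)) (f : A →ₗ[k] k) (a : A) (h : commMixed Δ f a ∈ CommAA Δ),
      φ e ⟨commMixed Δ f a, h⟩ = (e : ((A →ₗ[k] k) →ₗ[k] (A →ₗ[k] k))) f a)
    (h : A →ₗ[k] k) {b' : A} (hb' : b' ∈ B) (hu : commMixed Δ h b' ∈ CommAA Δ) :
    ∃ t : LKKT Δ ⊗[k] LKKT Δ, Good Δ φ (jA3 Δ ⟨commMixed Δ h b', hu⟩) t := by
  obtain ⟨tB, htB⟩ := hB b' hb'
  have memC : ∀ (p : A →ₗ[k] k) (x : A), commMixed Δ p x ∈ CommAA Δ :=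
    fun p x => Submodule.subset_span ⟨p, x, rfl⟩
  have hcomp : ∀ u : A →ₗ[k] k,
      (dmul Δ h u) ∘ₗ B.subtype = u ∘ₗ (ract Δ h ∘ₗ B.subtype) :=
    fun u => LinearMap.ext fun x => dmul_apply_ract Δ h u ↑x
  have hdd : ∀ u w : A →ₗ[k] k, dmul Δ (dmul Δ h u) w b'
      = pairT (u ∘ₗ (ract Δ h ∘ₗ B.subtype)) (w ∘ₗ B.subtype) tB := fun u w => by
    rw [dmul_eq_pairT Δ _ _ htB, hcomp u]
  refine ⟨((-1 : k) • (TensorProduct.map (jA1 Δ ∘ₗ (ract Δ h ∘ₗ B.subtype))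
          (jA4 Δ ∘ₗ B.subtype) tB)
      + (TensorProduct.map (jA1 Δ ∘ₗ B.subtype) (jA4 Δ ∘ₗ (ract Δ h ∘ₗ B.subtype))
          (TensorProduct.comm k _ _ tB))
      + (TensorProduct.map (jA4 Δ ∘ₗ B.subtype) (jA1 Δ ∘ₗ (ract Δ h ∘ₗ B.subtype))
          (TensorProduct.comm k _ _ tB))
      + (-1 : k) • (TensorProduct.map (jA4 Δ ∘ₗ (ract Δ h ∘ₗ B.subtype))
          (jA1 Δ ∘ₗ B.subtype) tB)
      + (TensorProduct.map (jA2 Δ ∘ₗ (ract Δ h ∘ₗ B.subtype)) (jA2 Δ ∘ₗ B.subtype) tB)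
      + (-1 : k) • (TensorProduct.map (jA2 Δ ∘ₗ B.subtype)
          (jA2 Δ ∘ₗ (ract Δ h ∘ₗ B.subtype)) (TensorProduct.comm k _ _ tB))
      + (∑ i, jA3 Δ ⟨commMixed Δ h ↑(bs i), memC _ _⟩
          ⊗ₜ[k] jA3 Δ ⟨commMixed Δ (bs.coord i ∘ₗ π) b', memC _ _⟩)
      + (-1 : k) • ∑ i, jA3 Δ ⟨commMixed Δ (bs.coord i ∘ₗ π) b', memC _ _⟩
          ⊗ₜ[k] jA3 Δ ⟨commMixed Δ h ↑(bs i), memC _ _⟩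
      : LKKT Δ ⊗[k] LKKT Δ), ?_⟩
  intro f g hf hg hbr
  have e0 : toFunc Δ φ (bracketStar Δ f g) hbr (jA3 Δ ⟨commMixed Δ h b', hu⟩)
      = φ ⟨(bracketStar Δ f g).2.2.1, hbr⟩ ⟨commMixed Δ h b', hu⟩ :=
    toFunc_jA3 Δ φ _ hbr _
  have e0' : φ ⟨(bracketStar Δ f g).2.2.1, hbr⟩ ⟨commMixed Δ h b', hu⟩
      = (bracketStar Δ f g).2.2.1 h b' := hφ _ h b' hu
  have e1 : (bracketStar Δ f g).2.2.1 h b'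
      = - dmul Δ (dmul Δ h f.1) g.2.2.2 b' + dmul Δ (dmul Δ h g.2.2.2) f.1 b'
        + dmul Δ (dmul Δ h g.1) f.2.2.2 b' - dmul Δ (dmul Δ h f.2.2.2) g.1 b'
        + dmul Δ (dmul Δ h f.2.1) g.2.1 b' - dmul Δ (dmul Δ h g.2.1) f.2.1 b'
        + g.2.2.1 (f.2.2.1 h) b' - f.2.2.1 (g.2.2.1 h) b' := by
    simp only [bracketStar, commD_apply, LinearMap.add_apply, LinearMap.sub_apply,
      LinearMap.neg_apply, LinearMap.comp_apply, map_sub, map_add, map_neg]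
    ring
  have r1 : pairT (M := LKKT Δ) (toFunc Δ φ f hf) (toFunc Δ φ g hg)
      (TensorProduct.map (jA1 Δ ∘ₗ (ract Δ h ∘ₗ B.subtype)) (jA4 Δ ∘ₗ B.subtype) tB)
      = dmul Δ (dmul Δ h f.1) g.2.2.2 b' := by
    rw [pairT_map, toFunc_comp_jA1', toFunc_comp_jA4', ← hdd]
  have r2 : pairT (M := LKKT Δ) (toFunc Δ φ f hf) (toFunc Δ φ g hg)
      (TensorProduct.map (jA1 Δ ∘ₗ B.subtype) (jA4 Δ ∘ₗ (ract Δ h ∘ₗ B.subtype))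
        (TensorProduct.comm k _ _ tB))
      = dmul Δ (dmul Δ h g.2.2.2) f.1 b' := by
    rw [pairT_map, toFunc_comp_jA1', toFunc_comp_jA4', pairT_comm, ← hdd]
  have r3 : pairT (M := LKKT Δ) (toFunc Δ φ f hf) (toFunc Δ φ g hg)
      (TensorProduct.map (jA4 Δ ∘ₗ B.subtype) (jA1 Δ ∘ₗ (ract Δ h ∘ₗ B.subtype))
        (TensorProduct.comm k _ _ tB))
      = dmul Δ (dmul Δ h g.1) f.2.2.2 b' := by
    rw [pairT_map, toFunc_comp_jA4', toFunc_comp_jA1', pairT_comm, ← hdd]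
  have r4 : pairT (M := LKKT Δ) (toFunc Δ φ f hf) (toFunc Δ φ g hg)
      (TensorProduct.map (jA4 Δ ∘ₗ (ract Δ h ∘ₗ B.subtype)) (jA1 Δ ∘ₗ B.subtype) tB)
      = dmul Δ (dmul Δ h f.2.2.2) g.1 b' := by
    rw [pairT_map, toFunc_comp_jA4', toFunc_comp_jA1', ← hdd]
  have r5 : pairT (M := LKKT Δ) (toFunc Δ φ f hf) (toFunc Δ φ g hg)
      (TensorProduct.map (jA2 Δ ∘ₗ (ract Δ h ∘ₗ B.subtype)) (jA2 Δ ∘ₗ B.subtype) tB)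
      = dmul Δ (dmul Δ h f.2.1) g.2.1 b' := by
    rw [pairT_map, toFunc_comp_jA2', toFunc_comp_jA2', ← hdd]
  have r6 : pairT (M := LKKT Δ) (toFunc Δ φ f hf) (toFunc Δ φ g hg)
      (TensorProduct.map (jA2 Δ ∘ₗ B.subtype) (jA2 Δ ∘ₗ (ract Δ h ∘ₗ B.subtype))
        (TensorProduct.comm k _ _ tB))
      = dmul Δ (dmul Δ h g.2.1) f.2.1 b' := by
    rw [pairT_map, toFunc_comp_jA2', toFunc_comp_jA2', pairT_comm, ← hdd]
  have r7 : pairT (M := LKKT Δ) (toFunc Δ φ f hf) (toFunc Δ φ g hg)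
      (∑ i, jA3 Δ ⟨commMixed Δ h ↑(bs i), memC _ _⟩
        ⊗ₜ[k] jA3 Δ ⟨commMixed Δ (bs.coord i ∘ₗ π) b', memC _ _⟩)
      = g.2.2.1 (f.2.2.1 h) b' := by
    rw [map_sum, keyK Δ hB hBfin bs π hπ hg hb' (f.2.2.1 h)]
    refine Finset.sum_congr rfl fun i _ => ?_
    rw [pairT_tmul, toFunc_jA3, toFunc_jA3,
      hφ ⟨f.2.2.1, hf⟩ _ _ (memC _ _), hφ ⟨g.2.2.1, hg⟩ _ _ (memC _ _)]
    all_goals ring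
  have r8 : pairT (M := LKKT Δ) (toFunc Δ φ f hf) (toFunc Δ φ g hg)
      (∑ i, jA3 Δ ⟨commMixed Δ (bs.coord i ∘ₗ π) b', memC _ _⟩
        ⊗ₜ[k] jA3 Δ ⟨commMixed Δ h ↑(bs i), memC _ _⟩)
      = f.2.2.1 (g.2.2.1 h) b' := by
    rw [map_sum, keyK Δ hB hBfin bs π hπ hf hb' (g.2.2.1 h)]
    refine Finset.sum_congr rfl fun i _ => ?_
    rw [pairT_tmul, toFunc_jA3, toFunc_jA3,
      hφ ⟨f.2.2.1, hf⟩ _ _ (memC _ _), hφ ⟨g.2.2.1, hg⟩ _ _ (memC _ _)]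
    all_goals ring
  rw [e0, e0', e1]
  simp only [map_add, map_smul, smul_eq_mul]
  rw [r1, r2, r3, r4, r5, r6, r7, r8]
  ring

end Lemma5Pieces

set_option maxHeartbeats 2000000 in
set_option synthInstance.maxHeartbeats 2000000 in
/-- **Lemma 5.** For a finite-dimensional subcoalgebra `B` of `⟨A, Δ⟩`, on the subspace
`L = B ⊕ B' ⊕ [A*,B] ⊕ B̄` of `L(A)` there is a linear map `Δ_B : L → L(A) ⊗ L(A)`
such that `⟨[f,g], l⟩ = ⟨ρ(f ⊗ g), Δ_B(l)⟩` for all `f, g ∈ L(A*)`, `l ∈ L`. -/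
theorem lemma5_DeltaB {k : Type*} [Field k] {A : Type*} [AddCommGroup A] [Module k A]
    (h2 : (2 : k) ≠ 0) (Δ : A →ₗ[k] A ⊗[k] A) (hJ : IsJordanCoalgebra Δ)
    (one : A →ₗ[k] k) (hone : ∀ f, dmul Δ one f = f ∧ dmul Δ f one = f)
    (φ : ↥(WIntDer Δ) →ₗ[k] (↥(CommAA Δ) →ₗ[k] k))
    (hφ : ∀ (e : ↥(WIntDer Δ)) (f : A →ₗ[k] k) (a : A) (h : commMixed Δ f a ∈ CommAA Δ),
      φ e ⟨commMixed Δ f a, h⟩ = (e : ((A →ₗ[k] k) →ₗ[k] (A →ₗ[k] k))) f a)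
    (hφbij : Function.Bijective φ)
    (B : Submodule k A) (hB : IsSubcoalgebra Δ B) (hBfin : FiniteDimensional k B) :
    ∃ ΔB : ↥((B.prod (B.prod ((Submodule.comap (CommAA Δ).subtype
          (Submodule.span k {u | ∃ (f : A →ₗ[k] k), ∃ b ∈ B, u = commMixed Δ f b})).prod B)))
        : Submodule k (LKKT Δ)) →ₗ[k] (LKKT Δ ⊗[k] LKKT Δ),
      ∀ (f g : (A →ₗ[k] k) × (A →ₗ[k] k) × ((A →ₗ[k] k) →ₗ[k] (A →ₗ[k] k)) × (A →ₗ[k] k))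
        (hf : f.2.2.1 ∈ WIntDer Δ) (hg : g.2.2.1 ∈ WIntDer Δ)
        (hbr : (bracketStar Δ f g).2.2.1 ∈ WIntDer Δ)
        (l : ↥((B.prod (B.prod ((Submodule.comap (CommAA Δ).subtype
          (Submodule.span k {u | ∃ (f : A →ₗ[k] k), ∃ b ∈ B, u = commMixed Δ f b})).prod B)))
        : Submodule k (LKKT Δ))),
        toFunc Δ φ (bracketStar Δ f g) hbr (l : LKKT Δ)
          = pairT (M := LKKT Δ) (toFunc Δ φ f hf) (toFunc Δ φ g hg) (ΔB l) := by
  classical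
  set L : Submodule k (LKKT Δ) := B.prod (B.prod ((Submodule.comap (CommAA Δ).subtype
      (Submodule.span k {u | ∃ (f : A →ₗ[k] k), ∃ b ∈ B, u = commMixed Δ f b})).prod B))
    with hLdef
  obtain ⟨π, hπ0⟩ := LinearMap.exists_leftInverse_of_injective B.subtype B.ker_subtype
  have hπ : ∀ z : ↥B, π ↑z = z := fun z => by
    simpa using LinearMap.congr_fun hπ0 z
  let bs := Module.finBasis k ↥B
  have memC : ∀ (p : A →ₗ[k] k) (x : A), commMixed Δ p x ∈ CommAA Δ :=
    fun p x => Submodule.subset_span ⟨p, x, rfl⟩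
  have hle : Submodule.span k {u | ∃ (f : A →ₗ[k] k), ∃ b ∈ B, u = commMixed Δ f b}
      ≤ CommAA Δ := by
    rw [Submodule.span_le]
    rintro u ⟨p, b'', hb'', rfl⟩
    exact memC p b''
  have p3full : ∀ (u : ((A →ₗ[k] k) × A) →ₗ[k] ((A →ₗ[k] k) × A))
      (hspan : u ∈ Submodule.span k {u | ∃ (f : A →ₗ[k] k), ∃ b ∈ B, u = commMixed Δ f b}),
      ∃ t : LKKT Δ ⊗[k] LKKT Δ, Good Δ φ (jA3 Δ ⟨u, hle hspan⟩) t := by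
    intro u hspan
    refine Submodule.span_induction
      (p := fun u hspan => ∃ t : LKKT Δ ⊗[k] LKKT Δ, Good Δ φ (jA3 Δ ⟨u, hle hspan⟩) t)
      ?_ ?_ ?_ ?_ hspan
    · rintro x ⟨p, b'', hb'', rfl⟩
      exact piece3 Δ φ hB hBfin bs π hπ hφ p hb'' (memC p b'')
    · refine ⟨0, ?_⟩
      rw [show (⟨0, hle (Submodule.zero_mem _)⟩ : ↥(CommAA Δ)) = 0 from Subtype.ext rfl,
        map_zero]
      exact Good.zero Δ φ
    · intro x y hx hy ihx ihy
      obtain ⟨tx, htx⟩ := ihx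
      obtain ⟨ty, hty⟩ := ihy
      refine ⟨tx + ty, ?_⟩
      rw [show (⟨x + y, hle (Submodule.add_mem _ hx hy)⟩ : ↥(CommAA Δ))
          = ⟨x, hle hx⟩ + ⟨y, hle hy⟩ from Subtype.ext rfl, map_add]
      exact Good.add Δ φ htx hty
    · intro c x hx ihx
      obtain ⟨tx, htx⟩ := ihx
      refine ⟨c • tx, ?_⟩
      rw [show (⟨c • x, hle (Submodule.smul_mem _ c hx)⟩ : ↥(CommAA Δ))
          = c • (⟨x, hle hx⟩ : ↥(CommAA Δ)) from Subtype.ext rfl, map_smul]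
      exact Good.smul Δ φ c htx
  have main : ∀ x : LKKT Δ, x ∈ L → ∃ t : LKKT Δ ⊗[k] LKKT Δ, Good Δ φ x t := by
    rintro ⟨a, b, v, c⟩ hx
    rw [hLdef] at hx
    simp only [Submodule.mem_prod, Submodule.mem_comap, Submodule.coe_subtype] at hx
    obtain ⟨ha, hb, hv, hc⟩ := hx
    obtain ⟨t1, h1⟩ := piece1 Δ φ hB hBfin bs π hπ hφ ha
    obtain ⟨t2, h2⟩ := piece2 Δ φ hB hBfin bs π hπ hφ hb
    obtain ⟨t3, h3⟩ := p3full ↑v hv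
    obtain ⟨t4, h4⟩ := piece4 Δ φ hB hBfin bs π hπ hφ hc
    have hv' : (⟨(↑v : ((A →ₗ[k] k) × A) →ₗ[k] ((A →ₗ[k] k) × A)), hle hv⟩
        : ↥(CommAA Δ)) = v := Subtype.ext rfl
    rw [hv'] at h3
    refine ⟨t1 + t2 + t3 + t4, ?_⟩
    have hdecomp : ((a, b, v, c) : LKKT Δ) = jA1 Δ a + jA2 Δ b + jA3 Δ v + jA4 Δ c := by
      simp [jA1_apply, jA2_apply, jA3_apply, jA4_apply, Prod.ext_iff]
    rw [hdecomp]
    exact Good.add Δ φ (Good.add Δ φ (Good.add Δ φ h1 h2) h3) h4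
  letI : AddCommGroup ↥L := Module.addCommMonoidToAddCommGroup k
  let bas := Module.Basis.ofVectorSpace k ↥L
  refine ⟨bas.constr k (fun i => (main ↑(bas i) (bas i).2).choose), ?_⟩
  intro f g hf hg hbr l
  have hext : (toFunc Δ φ (bracketStar Δ f g) hbr) ∘ₗ L.subtype
      = (pairT (M := LKKT Δ) (toFunc Δ φ f hf) (toFunc Δ φ g hg)) ∘ₗ
        (bas.constr k (fun i => (main ↑(bas i) (bas i).2).choose)) := by
    refine bas.ext fun i => ?_
    rw [LinearMap.comp_apply, LinearMap.comp_apply, Module.Basis.constr_basis]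
    exact (main ↑(bas i) (bas i).2).choose_spec f g hf hg hbr
  simpa using LinearMap.congr_fun hext l
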